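/- A complex 3×3 matrix A = (a_{ij}) lies in su(3) (i.e. is skew-Hermitian with trace zero) if and only if its real 6×6 image ρ(A) = (b_{ij}) under the standard embedding satisfies ρ(A) ∈ so(6), ε_{ijk} b_{jk} = 0 and κ_{jk} b_{jk} = 0, where ε and κ are the structure constants of the standard SU(3)-structure on ℝ^6. -/

import Mathlib

open Matrix

noncomputable section

/-- The coefficient array `κ_{ij}` of `κ₀ = e^{12}+e^{34}+e^{56}` (0-based indices). -/
def kap : Fin 6 → Fin 6 → ℝ := fun i j =>
  if (i = 0 ∧ j = 1) ∨ (i = 2 ∧ j = 3) ∨ (i = 4 ∧ j = 5) then 1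
  else if (i = 1 ∧ j = 0) ∨ (i = 3 ∧ j = 2) ∨ (i = 5 ∧ j = 4) then -1 else 0

/-- Values of `ε` on the strictly increasing triples (0-based):
`Ω₀ = e^{135}-e^{146}-e^{245}-e^{236}`. -/
def epsBase : Fin 6 → Fin 6 → Fin 6 → ℝ := fun i j k =>
  if i = 0 ∧ j = 2 ∧ k = 4 then 1
  else if i = 0 ∧ j = 3 ∧ k = 5 then -1
  else if i = 1 ∧ j = 3 ∧ k = 4 then -1
  else if i = 1 ∧ j = 2 ∧ k = 5 then -1 else 0

/-- Values of `ε̄` on the strictly increasing triples (0-based):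
`J₀Ω₀ = -e^{246}+e^{235}+e^{145}+e^{136}`. -/
def epsbarBase : Fin 6 → Fin 6 → Fin 6 → ℝ := fun i j k =>
  if i = 1 ∧ j = 3 ∧ k = 5 then -1
  else if i = 1 ∧ j = 2 ∧ k = 4 then 1
  else if i = 0 ∧ j = 3 ∧ k = 4 then 1
  else if i = 0 ∧ j = 2 ∧ k = 5 then 1 else 0

/-- Totally antisymmetric extension of a coefficient array supported on
strictly increasing triples. -/
def antisym3 (b : Fin 6 → Fin 6 → Fin 6 → ℝ) : Fin 6 → Fin 6 → Fin 6 → ℝ := fun i j k =>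
  ∑ σ : Equiv.Perm (Fin 3),
    ((Equiv.Perm.sign σ : ℤ) : ℝ) * b (![i, j, k] (σ 0)) (![i, j, k] (σ 1)) (![i, j, k] (σ 2))

/-- The totally antisymmetric array `ε_{ijk}` with `Ω₀ = (1/6) ε_{ijk} e^{ijk}`. -/
def eps : Fin 6 → Fin 6 → Fin 6 → ℝ := antisym3 epsBase

/-- The totally antisymmetric array `ε̄_{ijk}` with `J₀Ω₀ = (1/6) ε̄_{ijk} e^{ijk}`. -/
def epsbar : Fin 6 → Fin 6 → Fin 6 → ℝ := antisym3 epsbarBase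

/-- Kronecker delta `δ_{ij}`. -/
def kron (i j : Fin 6) : ℝ := if i = j then 1 else 0

/-- The standard real representation `ρ : gl(3,ℂ) → gl(6,ℝ)` induced by `J₀`:
`ρ(A)` is the block matrix with 2×2 blocks `[[Re a, Im a], [-Im a, Re a]]`. -/
def rho (A : Matrix (Fin 3) (Fin 3) ℂ) : Matrix (Fin 6) (Fin 6) ℝ := fun i j =>
  let p : Fin 3 := ⟨i.val / 2, by omega⟩
  let q : Fin 3 := ⟨j.val / 2, by omega⟩
  if i.val % 2 = 0 then (if j.val % 2 = 0 then (A p q).re else (A p q).im)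
  else (if j.val % 2 = 0 then -(A p q).im else (A p q).re)


open Equiv in
set_option maxRecDepth 10000 in
lemma antisym3_eval (b : Fin 6 → Fin 6 → Fin 6 → ℝ) (i j k : Fin 6) :
    antisym3 b i j k
    = b i j k - b i k j - b j i k + b j k i + b k i j - b k j i := by
  unfold antisym3
  simp only [Finset.univ_perm_fin_succ, Finset.sum_map, Fintype.sum_prod_type,
    Fin.sum_univ_succ, Finset.univ_unique, Finset.sum_singleton, Finset.sum_empty,
    Finset.univ_eq_empty]
  have h2 : ∀ (e : Perm (Fin 2)) (p : Fin 3), Perm.decomposeFin.symm (p, e) 2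
      = Equiv.swap 0 p ((e 1).succ) := fun e p =>
    Equiv.Perm.decomposeFin_symm_apply_succ e p 1
  simp only [Equiv.coe_toEmbedding, Equiv.Perm.decomposeFin.symm_sign,
    Equiv.Perm.decomposeFin_symm_apply_zero, Equiv.Perm.decomposeFin_symm_apply_one, h2,
    Subsingleton.elim (default : Equiv.Perm (Fin 1)) 1]
  norm_num [Equiv.swap_apply_def, Fin.ext_iff]
  simp only [show (![i, j, k] : Fin 3 → Fin 6) 2 = k from rfl]
  ring

lemma cv0 : ((0 : Fin 6) : ℕ) = 0 := rfl
lemma cv1 : ((1 : Fin 6) : ℕ) = 1 := rfl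
lemma cv2 : ((2 : Fin 6) : ℕ) = 2 := rfl
lemma cv3 : ((3 : Fin 6) : ℕ) = 3 := rfl
lemma cv4 : ((4 : Fin 6) : ℕ) = 4 := rfl
lemma cv5 : ((5 : Fin 6) : ℕ) = 5 := rfl
lemma mk0 (h : 0 < 3) : (⟨0, h⟩ : Fin 3) = 0 := rfl
lemma mk1 (h : 1 < 3) : (⟨1, h⟩ : Fin 3) = 1 := rfl
lemma mk2 (h : 2 < 3) : (⟨2, h⟩ : Fin 3) = 2 := rfl

/-- A complex 3×3 matrix `A` lies in `su(3)` (skew-Hermitian and traceless) iff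
its image `ρ(A) = (b_{ij})` lies in `so(6)` and satisfies `ε_{ijk} b_{jk} = 0`
(for all `i`) and `κ_{jk} b_{jk} = 0`. -/
theorem mem_su3_iff_rho (A : Matrix (Fin 3) (Fin 3) ℂ) :
    (Aᴴ = -A ∧ A.trace = 0) ↔
      ((rho A)ᵀ = -(rho A) ∧
        (∀ i, ∑ j, ∑ k, eps i j k * rho A j k = 0) ∧
        (∑ j, ∑ k, kap j k * rho A j k = 0)) := by
  have h' : ∀ p q, (Aᴴ = -A) → (A q p).re = -((A p q).re) ∧ (A q p).im = (A p q).im := by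
    intro p q h1
    have := congrFun (congrFun h1 p) q
    simpa [Matrix.conjTranspose_apply, Complex.ext_iff, neg_eq_iff_eq_neg] using this
  constructor
  · rintro ⟨h1, h2⟩
    have hc := fun p q => h' p q h1
    have ht : (A 0 0).re + (A 1 1).re + (A 2 2).re = 0
        ∧ (A 0 0).im + (A 1 1).im + (A 2 2).im = 0 := by
      have := h2
      simp only [Matrix.trace, Matrix.diag, Fin.sum_univ_three, Complex.ext_iff,
        Complex.add_re, Complex.add_im, Complex.zero_re, Complex.zero_im] at this
      exact this
    refine ⟨?_, ?_, ?_⟩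
    · ext i j
      fin_cases i <;> fin_cases j <;>
        simp [rho, Matrix.transpose_apply, Matrix.neg_apply,
          cv0, cv1, cv2, cv3, cv4, cv5, mk0, mk1, mk2] <;>
        linarith [(hc 0 0).1, (hc 0 0).2, (hc 0 1).1, (hc 0 1).2, (hc 0 2).1, (hc 0 2).2,
          (hc 1 0).1, (hc 1 0).2, (hc 1 1).1, (hc 1 1).2, (hc 1 2).1, (hc 1 2).2,
          (hc 2 0).1, (hc 2 0).2, (hc 2 1).1, (hc 2 1).2, (hc 2 2).1, (hc 2 2).2,
          ht.1, ht.2]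
    · intro i
      fin_cases i <;>
        simp [Fin.sum_univ_six, eps, antisym3_eval, epsBase, rho,
          cv0, cv1, cv2, cv3, cv4, cv5, mk0, mk1, mk2] <;>
        linarith [(hc 0 0).1, (hc 0 0).2, (hc 0 1).1, (hc 0 1).2, (hc 0 2).1, (hc 0 2).2,
          (hc 1 0).1, (hc 1 0).2, (hc 1 1).1, (hc 1 1).2, (hc 1 2).1, (hc 1 2).2,
          (hc 2 0).1, (hc 2 0).2, (hc 2 1).1, (hc 2 1).2, (hc 2 2).1, (hc 2 2).2,
          ht.1, ht.2]
    · simp [Fin.sum_univ_six, kap, rho, cv0, cv1, cv2, cv3, cv4, cv5, mk0, mk1, mk2]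
      linarith [(hc 0 0).2, (hc 1 1).2, (hc 2 2).2, ht.1, ht.2]
  · rintro ⟨h1, h2, h3⟩
    have g : ∀ i j : Fin 6, rho A j i = - rho A i j := by
      intro i j
      rw [← Matrix.transpose_apply (rho A) i j, h1, Matrix.neg_apply]
    have k1 := g 0 0; have k3 := g 0 2; have k4 := g 0 3
    have k5 := g 0 4; have k6 := g 0 5; have k7 := g 1 1; have k8 := g 1 2
    have k9 := g 1 3; have k10 := g 1 4; have k11 := g 1 5; have k12 := g 2 2
    have k14 := g 2 4; have k15 := g 2 5; have k16 := g 3 3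
    have k17 := g 3 4; have k18 := g 3 5; have k19 := g 4 4; have k20 := g 4 5
    have k21 := g 5 5
    simp [rho, cv0, cv1, cv2, cv3, cv4, cv5, mk0, mk1, mk2] at k1 k3 k4 k5 k6 k7 k8 k9 k10 k11 k12 k14 k15 k16 k17 k18 k19 k20 k21
    simp [Fin.sum_univ_six, kap, rho, cv0, cv1, cv2, cv3, cv4, cv5, mk0, mk1, mk2] at h3
    constructor
    · ext p q
      fin_cases p <;> fin_cases q <;>
        simp [Matrix.conjTranspose_apply, Matrix.neg_apply, Complex.ext_iff] <;>
        (try constructor) <;>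
        linarith [k1, k3, k4, k5, k6, k7, k8, k9, k10, k11, k12, k14, k15,
          k16, k17, k18, k19, k20, k21, h3]
    · simp only [Matrix.trace, Matrix.diag, Fin.sum_univ_three, Complex.ext_iff,
        Complex.add_re, Complex.add_im, Complex.zero_re, Complex.zero_im]
      constructor <;>
        linarith [k1, k7, k12, k16, k19, k21, h3]


end
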